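/- Let R be a Noetherian ring and let M be a finitely generated torsion-free R-module. Then the idealization A = R ⋉ M is a weakly Arf ring if and only if R is a weakly Arf ring and \overline{(a)}·M = aM for every a ∈ W(R), where \overline{(a)} is the integral closure of the principal ideal aR. -/

import Mathlib

open scoped TensorProduct

/-- `A` is a *weakly Arf ring*: whenever `x, y, z ∈ A` with `x` a non-zerodivisor on `A`
and the fractions `y/x` and `z/x` in the total ring of fractions `Q(A)` are integral
over `A`, then `y * z ∈ x A`. -/
def IsWeaklyArfRing (A : Type*) [CommRing A] : Prop :=
  ∀ (x y z : A) (hx : x ∈ nonZeroDivisors A),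
    IsIntegral A (IsLocalization.mk' (FractionRing A) y
      (⟨x, hx⟩ : nonZeroDivisors A)) →
    IsIntegral A (IsLocalization.mk' (FractionRing A) z
      (⟨x, hx⟩ : nonZeroDivisors A)) →
    y * z ∈ Ideal.span {x}

/-- `a` belongs to the integral closure of the ideal `I`: it satisfies an equation
`a ^ n + c 1 * a ^ (n - 1) + ⋯ + c n = 0` with `c i ∈ I ^ i`, for some `n ≥ 1`. -/
def MemIdealIntegralClosure {A : Type*} [CommRing A] (I : Ideal A) (a : A) : Prop :=
  ∃ n : ℕ, 0 < n ∧ ∃ c : ℕ → A,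
    (∀ i ∈ Finset.Icc 1 n, c i ∈ I ^ i) ∧
    a ^ n + ∑ i ∈ Finset.Icc 1 n, c i * a ^ (n - i) = 0

/-- The integral closure `Ī` of an ideal `I` of `A`, as a subset of `A`. -/
def idealIntegralClosure {A : Type*} [CommRing A] (I : Ideal A) : Set A :=
  {a | MemIdealIntegralClosure I a}

/-- An ideal `I` is integrally closed if `Ī = I`. -/
def Ideal.IsIntegrallyClosedIdeal {A : Type*} [CommRing A] (I : Ideal A) : Prop :=
  idealIntegralClosure I = (I : Set A)

namespace WArfAux

open Polynomial TrivSqZeroExt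

section General

variable {B : Type*} [CommRing B]

lemma key_aux (x y : B) (hx : x ∈ nonZeroDivisors B) (n : ℕ) (d : ℕ → B) :
    (algebraMap B (FractionRing B) x) ^ n *
      ((IsLocalization.mk' (FractionRing B) y (⟨x, hx⟩ : nonZeroDivisors B)) ^ n +
        ∑ i ∈ Finset.Icc 1 n, algebraMap B (FractionRing B) (d i) *
          (IsLocalization.mk' (FractionRing B) y (⟨x, hx⟩ : nonZeroDivisors B)) ^ (n - i)) =
      algebraMap B (FractionRing B) (y ^ n + ∑ i ∈ Finset.Icc 1 n, (x ^ i * d i) * y ^ (n - i)) := by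
  set Q := FractionRing B
  set s : nonZeroDivisors B := ⟨x, hx⟩
  set α : Q := IsLocalization.mk' Q y s with hα
  have hspec : α * algebraMap B Q x = algebraMap B Q y := IsLocalization.mk'_spec Q y s
  rw [mul_add, Finset.mul_sum, map_add, map_sum]
  congr 1
  · rw [← mul_pow, mul_comm (algebraMap B Q x) α, hspec, map_pow]
  · refine Finset.sum_congr rfl fun i hi => ?_
    have hin : i ≤ n := (Finset.mem_Icc.mp hi).2
    obtain ⟨k, hk⟩ : ∃ k, n = k + i := ⟨n - i, (Nat.sub_add_cancel hin).symm⟩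
    rw [hk, Nat.add_sub_cancel, pow_add, map_mul, map_mul, map_pow, map_pow, ← hspec, mul_pow]
    ring

/-- Key lemma: `y/x` is integral over `B` iff `y` lies in the integral closure of `(x)`. -/
lemma key1 (x y : B) (hx : x ∈ nonZeroDivisors B) :
    IsIntegral B (IsLocalization.mk' (FractionRing B) y (⟨x, hx⟩ : nonZeroDivisors B)) ↔
      MemIdealIntegralClosure (Ideal.span {x}) y := by
  rcases subsingleton_or_nontrivial B with hB | hB
  · constructor
    · intro _
      exact ⟨1, one_pos, fun _ => 0, fun i _ => zero_mem _, Subsingleton.elim _ _⟩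
    · intro _
      exact ⟨X, monic_X, Subsingleton.elim _ _⟩
  set Q := FractionRing B
  set s : nonZeroDivisors B := ⟨x, hx⟩
  set α : Q := IsLocalization.mk' Q y s with hα
  have hxu : IsUnit (algebraMap B Q x) := IsLocalization.map_units Q s
  have hinj : Function.Injective (algebraMap B Q) := IsFractionRing.injective B Q
  constructor
  · rintro ⟨p, hmonic, heval⟩
    have hp0 : p ≠ 0 := hmonic.ne_zero
    set q := p * X with hq
    have hmonic' : q.Monic := hmonic.mul monic_X
    have heval' : aeval α q = 0 := by
      rw [hq, map_mul, show (aeval α) p = 0 from heval, zero_mul]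
    set n := q.natDegree with hn
    have hn1 : 1 ≤ n := by
      have : q.natDegree = p.natDegree + 1 := natDegree_mul_X hp0
      omega
    set d : ℕ → B := fun i => q.coeff (n - i) with hd
    have hsum : (α : Q) ^ n + ∑ i ∈ Finset.Icc 1 n,
        algebraMap B Q (d i) * α ^ (n - i) = 0 := by
      have h1 : ∑ i ∈ Finset.Icc 1 n, algebraMap B Q (d i) * α ^ (n - i) =
          ∑ j ∈ Finset.range n, q.coeff j • α ^ j := by
        refine Finset.sum_nbij' (fun i => n - i) (fun j => n - j) ?_ ?_ ?_ ?_ ?_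
        · intro i hi
          have := Finset.mem_Icc.mp hi
          exact Finset.mem_range.mpr (by omega)
        · intro j hj
          have := Finset.mem_range.mp hj
          exact Finset.mem_Icc.mpr (by omega)
        · intro i hi; have := Finset.mem_Icc.mp hi; omega
        · intro j hj; have := Finset.mem_range.mp hj; omega
        · intro i hi
          rw [Algebra.smul_def]
      have h2 := aeval_eq_sum_range (R := B) (p := q) α
      rw [heval', ← hn] at h2
      have h3 : ∑ i ∈ Finset.range (n + 1), q.coeff i • α ^ i =
          (∑ j ∈ Finset.range n, q.coeff j • α ^ j) + q.coeff n • α ^ n :=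
        Finset.sum_range_succ _ n
      have hc : q.coeff n = 1 := hmonic'.coeff_natDegree
      rw [hc, one_smul] at h3
      rw [h1, add_comm, ← h3]
      exact h2.symm
    have hmain := key_aux x y hx n d
    rw [hsum, mul_zero] at hmain
    have heqB : y ^ n + ∑ i ∈ Finset.Icc 1 n, (x ^ i * d i) * y ^ (n - i) = 0 :=
      hinj (by rw [hmain.symm, map_zero])
    refine ⟨n, hn1, fun i => x ^ i * d i, fun i _ => ?_, heqB⟩
    rw [Ideal.span_singleton_pow, Ideal.mem_span_singleton]
    exact Dvd.intro _ rfl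
  · rintro ⟨n, hn, c, hc, heq⟩
    have hdvd : ∀ i ∈ Finset.Icc 1 n, x ^ i ∣ c i := fun i hi => by
      have := hc i hi
      rwa [Ideal.span_singleton_pow, Ideal.mem_span_singleton] at this
    choose! d hdspec using hdvd
    set q : B[X] := X ^ n + ∑ i ∈ Finset.Icc 1 n, C (d i) * X ^ (n - i) with hqdef
    have hmonic : q.Monic := by
      apply monic_X_pow_add
      refine lt_of_le_of_lt (degree_sum_le _ _) ?_
      rw [Finset.sup_lt_iff (by exact_mod_cast WithBot.bot_lt_coe n)]
      intro i hi
      refine lt_of_le_of_lt (degree_C_mul_X_pow_le _ _) ?_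
      have := Finset.mem_Icc.mp hi
      exact_mod_cast Nat.sub_lt (by omega) (by omega)
    have heval : aeval α q = 0 := by
      have hev : aeval α q = α ^ n + ∑ i ∈ Finset.Icc 1 n,
          algebraMap B Q (d i) * α ^ (n - i) := by
        rw [hqdef]
        simp [map_sum, Algebra.smul_def]
      have hmain := key_aux x y hx n d
      have hcd : ∑ i ∈ Finset.Icc 1 n, (x ^ i * d i) * y ^ (n - i) =
          ∑ i ∈ Finset.Icc 1 n, c i * y ^ (n - i) :=
        Finset.sum_congr rfl fun i hi => by rw [← hdspec i hi]
      rw [hcd, heq, map_zero] at hmain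
      have := (hxu.pow n).mul_right_eq_zero.mp hmain
      rw [hev, this]
    exact ⟨q, hmonic, heval⟩

lemma mem_map {A B : Type*} [CommRing A] [CommRing B] (f : A →+* B) {x a : A}
    (h : MemIdealIntegralClosure (Ideal.span {x}) a) :
    MemIdealIntegralClosure (Ideal.span {f x}) (f a) := by
  obtain ⟨n, hn, c, hc, heq⟩ := h
  refine ⟨n, hn, fun i => f (c i), fun i hi => ?_, ?_⟩
  · rw [Ideal.span_singleton_pow, Ideal.mem_span_singleton]
    have := hc i hi
    rw [Ideal.span_singleton_pow, Ideal.mem_span_singleton] at this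
    obtain ⟨r, hr⟩ := this
    exact ⟨f r, by show f (c i) = _; rw [hr, map_mul, map_pow]⟩
  · have := congrArg f heq
    simpa [map_add, map_sum, map_mul, map_pow] using this

lemma isIntegral_of_sq_zero {Q : Type*} [CommRing Q] [Algebra B Q] {ξ : Q} (h : ξ ^ 2 = 0) :
    IsIntegral B ξ :=
  ⟨X ^ 2, monic_X_pow 2, by simpa using h⟩

end General

section Tsze

variable {R M : Type*} [CommRing R] [AddCommGroup M] [Module R M] [Module Rᵐᵒᵖ M]
  [IsCentralScalar R M]

variable (R M) in
/-- the projection `R ⋉ M → R` as a ring hom -/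
def fstRingHom : TrivSqZeroExt R M →+* R where
  toFun := fun x => x.fst
  map_one' := rfl
  map_mul' := fun _ _ => rfl
  map_zero' := rfl
  map_add' := fun _ _ => rfl

lemma memW_A (htf : ∀ r ∈ nonZeroDivisors R, ∀ m : M, r • m = 0 → m = 0)
    {x : TrivSqZeroExt R M} (hx : x.fst ∈ nonZeroDivisors R) :
    x ∈ nonZeroDivisors (TrivSqZeroExt R M) := by
  rw [mem_nonZeroDivisors_iff_right]
  intro z hz
  have h1 : z.fst * x.fst = 0 := by
    have := congrArg fst hz; simpa using this
  have h2 : z.fst = 0 := mem_nonZeroDivisors_iff_right.mp hx _ h1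
  have h3 : z.fst • x.snd + MulOpposite.op x.fst • z.snd = 0 := by
    have := congrArg snd hz; simpa using this
  rw [h2, zero_smul, zero_add, op_smul_eq_smul] at h3
  have h4 : z.snd = 0 := htf _ hx _ h3
  ext <;> simp [h2, h4]

lemma fst_memW {x : TrivSqZeroExt R M} (hx : x ∈ nonZeroDivisors (TrivSqZeroExt R M)) :
    x.fst ∈ nonZeroDivisors R := by
  rw [mem_nonZeroDivisors_iff_right]
  intro b hb
  have key : inr (b • x.snd) * x = 0 := by
    ext
    · simp
    · simp only [snd_mul, snd_inr, fst_inr, zero_smul, smul_zero, add_zero, zero_add,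
        op_smul_eq_smul, smul_smul, mul_comm x.fst b, hb, snd_zero]
  have h1 : (inr (b • x.snd) : TrivSqZeroExt R M) = 0 := mem_nonZeroDivisors_iff_right.mp hx _ key
  have h2 : b • x.snd = 0 := by
    have := congrArg snd h1; simpa using this
  have key2 : inl b * x = 0 := by
    ext
    · simp [hb]
    · simpa [op_smul_eq_smul] using h2
  have h3 : (inl b : TrivSqZeroExt R M) = 0 := mem_nonZeroDivisors_iff_right.mp hx _ key2
  have := congrArg fst h3; simpa using this

lemma mem_span_smul_top {a : R} {m' : M} :
    m' ∈ Ideal.span {a} • (⊤ : Submodule R M) ↔ ∃ w, a • w = m' := by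
  constructor
  · intro h
    have hle : Ideal.span {a} • (⊤ : Submodule R M) ≤
        LinearMap.range (LinearMap.lsmul R M a) := by
      rw [Submodule.smul_le]
      intro r hr n _
      obtain ⟨u, rfl⟩ := Ideal.mem_span_singleton.mp hr
      exact ⟨u • n, by simp [smul_smul, mul_comm]⟩
    exact hle h
  · rintro ⟨w, rfl⟩
    exact Submodule.smul_mem_smul (Ideal.mem_span_singleton_self a) trivial

end Tsze

end WArfAux

open WArfAux Polynomial TrivSqZeroExt in
/-- For a Noetherian ring `R` and a finitely generated torsion-free `R`-module `M`,
the idealization `A = R ⋉ M` is weakly Arf iff `R` is weakly Arf and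
`\overline{(a)} · M = a M` for every non-zerodivisor `a` of `R`. -/
theorem weaklyArf_idealization (R M : Type*) [CommRing R] [IsNoetherianRing R]
    [AddCommGroup M] [Module R M] [Module Rᵐᵒᵖ M] [IsCentralScalar R M]
    [Module.Finite R M]
    (htf : ∀ r ∈ nonZeroDivisors R, ∀ m : M, r • m = 0 → m = 0) :
    IsWeaklyArfRing (TrivSqZeroExt R M) ↔
      (IsWeaklyArfRing R ∧
        ∀ a ∈ nonZeroDivisors R, ∀ I : Ideal R,
          (I : Set R) = idealIntegralClosure (Ideal.span {a}) →
          I • (⊤ : Submodule R M) = Ideal.span {a} • (⊤ : Submodule R M)) := by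
  set A := TrivSqZeroExt R M with hA
  constructor
  · intro hWA
    constructor
    · -- R is weakly Arf
      intro x y z hx hy hz
      have hxA : (inl x : A) ∈ nonZeroDivisors A := memW_A htf (by simpa using hx)
      have hy' : MemIdealIntegralClosure (Ideal.span {(inl x : A)}) (inl y) := by
        have := mem_map (inlHom R M) ((key1 x y hx).mp hy)
        simpa using this
      have hz' : MemIdealIntegralClosure (Ideal.span {(inl x : A)}) (inl z) := by
        have := mem_map (inlHom R M) ((key1 x z hx).mp hz)
        simpa using this
      have h := hWA (inl x) (inl y) (inl z) hxA
        ((key1 _ _ hxA).mpr hy') ((key1 _ _ hxA).mpr hz')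
      rw [Ideal.mem_span_singleton] at h ⊢
      obtain ⟨w, hw⟩ := h
      refine ⟨w.fst, ?_⟩
      have := congrArg fst hw
      simpa using this
    · -- the module condition
      intro a ha I hI
      apply le_antisymm
      · rw [Submodule.smul_le]
        intro y hy m _
        have hy' : MemIdealIntegralClosure (Ideal.span {a}) y := by
          have : y ∈ (I : Set R) := hy
          rw [hI] at this
          exact this
        have haA : (inl a : A) ∈ nonZeroDivisors A := memW_A htf (by simpa using ha)
        have h1 : IsIntegral A (IsLocalization.mk' (FractionRing A) (inl y)
            (⟨inl a, haA⟩ : nonZeroDivisors A)) := by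
          refine (key1 _ _ haA).mpr ?_
          have := mem_map (inlHom R M) hy'
          simpa using this
        have h2 : IsIntegral A (IsLocalization.mk' (FractionRing A) (inr m)
            (⟨inl a, haA⟩ : nonZeroDivisors A)) := by
          apply isIntegral_of_sq_zero
          rw [sq, ← IsLocalization.mk'_mul, inr_mul_inr, IsLocalization.mk'_zero]
        have h := hWA (inl a) (inl y) (inr m) haA h1 h2
        rw [Ideal.mem_span_singleton] at h
        obtain ⟨w, hw⟩ := h
        have hsnd : y • m = a • w.snd := by
          have := congrArg snd hw
          simpa [op_smul_eq_smul] using this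
        rw [hsnd]
        exact mem_span_smul_top.mpr ⟨w.snd, rfl⟩
      · refine Submodule.smul_mono_left (Ideal.span_le.mpr ?_)
        rw [Set.singleton_subset_iff]
        show a ∈ (I : Set R)
        rw [hI]
        refine ⟨1, one_pos, fun _ => -a, fun i hi => ?_, by simp⟩
        have : i = 1 := by simpa using hi
        subst this
        rw [pow_one]
        exact neg_mem (Ideal.mem_span_singleton_self a)
  · rintro ⟨hR, hmod⟩ x y z hx hy hz
    set Q := FractionRing R
    have ha : x.fst ∈ nonZeroDivisors R := fst_memW hx
    have hy1 : MemIdealIntegralClosure (Ideal.span {x.fst}) y.fst :=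
      mem_map (fstRingHom R M) ((key1 x y hx).mp hy)
    have hz1 : MemIdealIntegralClosure (Ideal.span {x.fst}) z.fst :=
      mem_map (fstRingHom R M) ((key1 x z hx).mp hz)
    have hyint : IsIntegral R (IsLocalization.mk' Q y.fst
        (⟨x.fst, ha⟩ : nonZeroDivisors R)) := (key1 _ _ ha).mpr hy1
    have hzint : IsIntegral R (IsLocalization.mk' Q z.fst
        (⟨x.fst, ha⟩ : nonZeroDivisors R)) := (key1 _ _ ha).mpr hz1
    obtain ⟨b, hb⟩ := Ideal.mem_span_singleton.mp
      (hR x.fst y.fst z.fst ha hyint hzint)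
    -- b is also in the integral closure
    have hbint : IsIntegral R (IsLocalization.mk'
        Q b (⟨x.fst, ha⟩ : nonZeroDivisors R)) := by
      have hbeq : IsLocalization.mk' Q y.fst (⟨x.fst, ha⟩ : nonZeroDivisors R) *
          IsLocalization.mk' Q z.fst (⟨x.fst, ha⟩ : nonZeroDivisors R) =
          IsLocalization.mk' Q b (⟨x.fst, ha⟩ : nonZeroDivisors R) := by
        rw [← IsLocalization.mk'_mul, hb, mul_comm x.fst b]
        exact IsLocalization.mk'_cancel b (⟨x.fst, ha⟩ : nonZeroDivisors R) (⟨x.fst, ha⟩ : nonZeroDivisors R)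
      rw [← hbeq]
      exact hyint.mul hzint
    -- the ideal I given by the integral closure of (x.fst)
    set f : R →ₗ[R] Q :=
      { toFun := fun t => algebraMap R Q t *
          IsLocalization.mk' Q 1 (⟨x.fst, ha⟩ : nonZeroDivisors R)
        map_add' := fun t u => by rw [map_add, add_mul]
        map_smul' := fun r t => by
          rw [RingHom.id_apply, Algebra.smul_def, Algebra.smul_def, map_mul, mul_assoc]
          simp } with hf
    have hfval : ∀ t : R, f t = IsLocalization.mk' Q t (⟨x.fst, ha⟩ : nonZeroDivisors R) := by
      intro t
      rw [hf]
      exact (IsLocalization.mk'_eq_mul_mk'_one t _).symm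
    set I : Ideal R := Submodule.comap f
      (Subalgebra.toSubmodule (integralClosure R Q)) with hIdef
    have hImem : ∀ t : R, t ∈ I ↔ IsIntegral R
        (IsLocalization.mk' Q t (⟨x.fst, ha⟩ : nonZeroDivisors R)) := by
      intro t
      rw [hIdef, Submodule.mem_comap, Subalgebra.mem_toSubmodule, hfval]
      rfl
    have hIset : (I : Set R) = idealIntegralClosure (Ideal.span {x.fst}) := by
      ext t
      show t ∈ I ↔ MemIdealIntegralClosure (Ideal.span {x.fst}) t
      rw [hImem]
      exact key1 _ _ ha
    have hIM := hmod x.fst ha I hIset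
    have hyI : y.fst ∈ I := (hImem _).mpr hyint
    have hzI : z.fst ∈ I := (hImem _).mpr hzint
    have hbI : b ∈ I := (hImem _).mpr hbint
    have hsmul : ∀ {t : R}, t ∈ I → ∀ m : M, t • m ∈ Ideal.span {x.fst} • (⊤ : Submodule R M) :=
      fun ht m => hIM ▸ Submodule.smul_mem_smul ht trivial
    have he : y.fst • z.snd + z.fst • y.snd - b • x.snd ∈
        Ideal.span {x.fst} • (⊤ : Submodule R M) :=
      sub_mem (add_mem (hsmul hyI _) (hsmul hzI _)) (hsmul hbI _)
    obtain ⟨w, hw⟩ := mem_span_smul_top.mp he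
    rw [Ideal.mem_span_singleton]
    refine ⟨inl b + inr w, ?_⟩
    ext
    · have : (y * z).fst = y.fst * z.fst := fst_mul y z
      simp [this, hb]
    · show (y * z).snd = (x * (inl b + inr w)).snd
      rw [snd_mul, snd_mul]
      simp only [fst_add, fst_inl, fst_inr, add_zero, snd_add, snd_inl, snd_inr, zero_add,
        op_smul_eq_smul]
      rw [hw]
      abel
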